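/- Let 0 < p < ∞ and let v be an admissible weight function. If sup{ v(x)/v(y) : 0 ≤ x ≤ y } < ∞, then for every f ∈ L^p_v(ℝ₊), T_t f converges to 0 in norm as t → ∞. -/

import Mathlib

open MeasureTheory Filter Set
open scoped ENNReal

/-- The `L^p_v` norm of a function on `[0,∞)`:
`‖f‖ = (∫₀^∞ |f(x)|^p v(x) dx)^(1/p)`. -/
noncomputable def lpNorm (p : ℝ) (v : ℝ → ℝ) (f : ℝ → ℝ) : ℝ :=
  (∫ x in Set.Ici (0:ℝ), |f x| ^ p * v x) ^ (1 / p)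

/-- Membership in the weighted Lebesgue space `L^p_v(ℝ₊)`. -/
def MemLpW (p : ℝ) (v : ℝ → ℝ) (f : ℝ → ℝ) : Prop :=
  AEStronglyMeasurable f (volume.restrict (Set.Ici (0:ℝ))) ∧
    IntegrableOn (fun x => |f x| ^ p * v x) (Set.Ici (0:ℝ))

/-- The left translation operator `(T_t f)(x) = f (x + t)`. -/
def translateW (t : ℝ) (f : ℝ → ℝ) : ℝ → ℝ := fun x => f (x + t)

/-- `v` is an admissible weight function: strictly positive, locally integrable on `[0,∞)`,
and there are `M ≥ 1`, `w ≥ 0` with `v x ≤ M * exp (w*t) * v (x+t)` for all `x, t ≥ 0`. -/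
def AdmissibleWeight (v : ℝ → ℝ) : Prop :=
  (∀ x, 0 ≤ x → 0 < v x) ∧
  (∀ a, 0 ≤ a → IntegrableOn v (Set.Icc (0:ℝ) a)) ∧
  ∃ M, 1 ≤ M ∧ ∃ w, 0 ≤ w ∧ ∀ x, 0 ≤ x → ∀ t, 0 ≤ t →
    v x ≤ M * Real.exp (w * t) * v (x + t)

/-- The set `{ v x / v y : 0 ≤ x ≤ y }`. -/
def ratioSet (v : ℝ → ℝ) : Set ℝ := {r | ∃ x y, 0 ≤ x ∧ x ≤ y ∧ r = v x / v y}

theorem lp_translate_tendsto_zero_of_bounded_ratio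
    (p : ℝ) (hp : 0 < p) (v : ℝ → ℝ) (hv : AdmissibleWeight v)
    (hbdd : BddAbove (ratioSet v)) :
    ∀ f, MemLpW p v f →
      Filter.Tendsto (fun t => lpNorm p v (translateW t f)) Filter.atTop (nhds 0) := by
  intro f hf
  obtain ⟨hfm, hG⟩ := hf
  obtain ⟨hvpos, -, -⟩ := hv
  obtain ⟨C, hC⟩ := hbdd
  have hCub : ∀ x y : ℝ, 0 ≤ x → x ≤ y → v x / v y ≤ C := fun x y hx hxy =>
    hC ⟨x, y, hx, hxy, rfl⟩
  have hC0 : (0:ℝ) ≤ C := by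
    have h1 : v 0 / v 0 ≤ C := hCub 0 0 le_rfl le_rfl
    have : v 0 / v 0 = 1 := div_self (ne_of_gt (hvpos 0 le_rfl))
    linarith [this ▸ h1]
  set G : ℝ → ℝ := fun y => |f y| ^ p * v y with hGdef
  -- pointwise bound on v
  have hvbound : ∀ x t : ℝ, 0 ≤ x → 0 ≤ t → v x ≤ C * v (x + t) := by
    intro x t hx ht
    have hpos : 0 < v (x + t) := hvpos _ (by linarith)
    have := hCub x (x + t) hx (by linarith)
    rw [div_le_iff₀ hpos] at this
    linarith
  -- the tail integral tends to zero
  have hGIoi : IntegrableOn G (Ioi 0) := hG.mono_set Ioi_subset_Ici_self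
  have htail : Tendsto (fun t => ∫ y in Ici t, G y) atTop (nhds 0) := by
    have hIoi : Tendsto (fun t => ∫ y in (0:ℝ)..t, G y) atTop
        (nhds (∫ y in Ioi (0:ℝ), G y)) :=
      intervalIntegral_tendsto_integral_Ioi 0 hGIoi tendsto_id
    have hsub : Tendsto (fun t => (∫ y in Ioi (0:ℝ), G y) - ∫ y in (0:ℝ)..t, G y)
        atTop (nhds 0) := by
      have := (tendsto_const_nhds (x := ∫ y in Ioi (0:ℝ), G y) (f := atTop)).sub hIoi
      simpa using this
    refine hsub.congr' ?_
    filter_upwards [eventually_ge_atTop (0:ℝ)] with t ht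
    have hsplit : Ioi (0:ℝ) = Ioc 0 t ∪ Ioi t := (Ioc_union_Ioi_eq_Ioi ht).symm
    have hdisj : Disjoint (Ioc (0:ℝ) t) (Ioi t) := Ioc_disjoint_Ioi le_rfl
    have h1 : IntegrableOn G (Ioc 0 t) := hGIoi.mono_set Ioc_subset_Ioi_self
    have h2 : IntegrableOn G (Ioi t) := hGIoi.mono_set (Ioi_subset_Ioi ht)
    have := setIntegral_union hdisj measurableSet_Ioi h1 h2
    rw [← hsplit] at this
    rw [intervalIntegral.integral_of_le ht, integral_Ici_eq_integral_Ioi]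
    rw [this]; ring
  -- main integral bound
  have hkey : ∀ t : ℝ, 0 ≤ t →
      (∫ x in Ici (0:ℝ), |f (x + t)| ^ p * v x) ≤ C * ∫ y in Ici t, G y := by
    intro t ht
    have hemb : MeasurableEmbedding (fun x : ℝ => x + t) := measurableEmbedding_addRight t
    have hpre : (fun x : ℝ => x + t) ⁻¹' Ici t = Ici 0 := by
      ext x; simp [le_add_iff_nonneg_left]
    have hchange : (∫ x in Ici (0:ℝ), C * G (x + t)) = C * ∫ y in Ici t, G y := by
      rw [← hpre,
        (measurePreserving_add_right volume t).setIntegral_preimage_emb hemb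
          (fun y => C * G y) (Ici t), integral_const_mul]
    rw [← hchange]
    refine integral_mono_of_nonneg ?_ ?_ ?_
    · filter_upwards [ae_restrict_mem measurableSet_Ici] with x hx
      exact mul_nonneg (Real.rpow_nonneg (abs_nonneg _) p) (hvpos x hx).le
    · have hint : IntegrableOn (fun y => C * G y) (Ici t) :=
        (hG.mono_set (Ici_subset_Ici.mpr ht)).const_mul C
      have := ((measurePreserving_add_right volume t).integrableOn_comp_preimage hemb
        (f := fun y => C * G y) (s := Ici t)).mpr hint
      rwa [hpre] at this
    · filter_upwards [ae_restrict_mem measurableSet_Ici] with x hx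
      have h1 : v x ≤ C * v (x + t) := hvbound x t hx ht
      have h2 : (0:ℝ) ≤ |f (x + t)| ^ p := Real.rpow_nonneg (abs_nonneg _) p
      calc |f (x + t)| ^ p * v x ≤ |f (x + t)| ^ p * (C * v (x + t)) :=
            mul_le_mul_of_nonneg_left h1 h2
        _ = C * G (x + t) := by simp [hGdef]; ring
  -- squeeze for the inner integral
  have hI : Tendsto (fun t => ∫ x in Ici (0:ℝ), |f (x + t)| ^ p * v x) atTop (nhds 0) := by
    refine tendsto_of_tendsto_of_tendsto_of_le_of_le' tendsto_const_nhds
      (by simpa using htail.const_mul C) ?_ ?_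
    · filter_upwards [eventually_ge_atTop (0:ℝ)] with t _
      exact setIntegral_nonneg measurableSet_Ici fun x hx =>
        mul_nonneg (Real.rpow_nonneg (abs_nonneg _) p) (hvpos x hx).le
    · filter_upwards [eventually_ge_atTop (0:ℝ)] with t ht
      exact hkey t ht
  -- compose with rpow
  have hcont : Tendsto (fun s : ℝ => s ^ (1 / p)) (nhds 0) (nhds 0) := by
    have h := (Real.continuousAt_rpow_const 0 (1 / p)
      (Or.inr (by positivity))).tendsto
    rwa [Real.zero_rpow (by positivity : (1:ℝ)/p ≠ 0)] at h
  have hfin := hcont.comp hI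
  simpa [_root_.lpNorm, translateW, Function.comp_def] using hfin
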